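/- Let a and b be nonzero integers with |a| ≠ 1. Then there exist a constant c > 0 and x₀ such that for all real x ≥ x₀, the number of primes p ≤ x with p ∤ a and such that the residue of b modulo p lies in the multiplicative subgroup of 𝔽_p^× generated by the residue of a modulo p is at least c·log log x. -/

import Mathlib

open Finset Filter

namespace TVAux

def f (a b : ℤ) (n : ℕ) : ℕ := (a ^ n - b).natAbs

def Fk (a b : ℤ) (k : ℕ) : Finset ℕ :=
  (Finset.Ioc (b.natAbs+1) k).biUnion
    (fun n => ((f a b n).primeFactors.filter (fun p => ¬ p ∣ a.natAbs)))

lemma f_lower {a b : ℤ} (hA : 2 ≤ a.natAbs) {n : ℕ} (hn : b.natAbs + 1 < n) :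
    2 ^ (n - 1) ≤ f a b n := by
  have hB : (b.natAbs : ℤ) < 2 ^ (n - 1) := by
    have h1 : b.natAbs < 2 ^ b.natAbs := Nat.lt_two_pow_self
    have h2 : (2:ℕ) ^ b.natAbs ≤ 2 ^ (n-1) := Nat.pow_le_pow_right (by norm_num) (by omega)
    exact_mod_cast lt_of_lt_of_le h1 h2
  have ha2 : (2:ℤ) ≤ |a| := by
    rw [Int.abs_eq_natAbs]; exact_mod_cast hA
  have h3 : (2:ℤ) ^ n ≤ |a ^ n| := by
    rw [abs_pow]; exact pow_le_pow_left₀ (by norm_num) ha2 n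
  have h4 : |b| = (b.natAbs : ℤ) := Int.abs_eq_natAbs b
  have h5 : |a ^ n| - |b| ≤ |a ^ n - b| := abs_sub_abs_le_abs_sub _ _
  have hpow : (2:ℤ) ^ n = 2 ^ (n-1) * 2 := by
    rw [← pow_succ]; congr 1; omega
  have hkey : (2:ℤ) ^ (n-1) ≤ |a ^ n - b| := by
    have : |b| < 2 ^ (n-1) := by rw [h4]; exact hB
    linarith
  rw [Int.abs_eq_natAbs] at hkey
  exact_mod_cast hkey

lemma f_upper {a b : ℤ} (hA : 2 ≤ a.natAbs) {n k : ℕ} (h1 : 1 ≤ n) (hnk : n ≤ k) :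
    f a b n ≤ (2 * (a.natAbs + b.natAbs)) ^ k := by
  have h5 : f a b n ≤ a.natAbs ^ n + b.natAbs :=
    calc (a ^ n - b).natAbs ≤ (a ^ n).natAbs + b.natAbs := Int.natAbs_sub_le _ _
    _ = a.natAbs ^ n + b.natAbs := by rw [Int.natAbs_pow]
  set A := a.natAbs; set B := b.natAbs
  have h6 : A ^ n + B ≤ (2 * (A + B)) ^ n := by
    have he : (2 * (A+B))^n = 2^n * (A+B)^n := (mul_pow _ _ _)
    have h7 : A ^ n ≤ (A+B)^n := Nat.pow_le_pow_left (by omega) n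
    have hAB : 1 ≤ A + B := by omega
    have h8 : B ≤ (A+B)^n := by
      have := Nat.le_self_pow (show n ≠ 0 by omega) (A+B)
      omega
    have h9 : 2 ≤ 2^n := Nat.one_lt_two_pow_iff.2 (by omega)
    have h10 : 0 < (A+B)^n := pow_pos (by omega) n
    calc A ^ n + B ≤ (A+B)^n + (A+B)^n := Nat.add_le_add h7 h8
    _ = 2 * (A+B)^n := by ring
    _ ≤ 2^n * (A+B)^n := Nat.mul_le_mul_right _ h9
    _ = (2 * (A+B))^n := he.symm
  have hC1 : 1 ≤ 2 * (A + B) := by omega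
  exact h5.trans (h6.trans (Nat.pow_le_pow_right hC1 hnk))

lemma f_ne_zero {a b : ℤ} (hA : 2 ≤ a.natAbs) {n : ℕ} (hn : b.natAbs + 1 < n) :
    f a b n ≠ 0 := by
  have := f_lower hA hn
  have : 0 < 2 ^ (n-1) := pow_pos (by norm_num) _
  omega


lemma harmonic_le (V : ℕ) : ∑ m ∈ Finset.Icc 1 V, (1:ℝ)/m ≤ 1 + Real.log V := by
  induction V with
  | zero => simp
  | succ V ih =>
    rcases Nat.eq_zero_or_pos V with rfl | hV
    · simp
    · rw [Finset.sum_Icc_succ_top (by omega)]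
      have hstep : Real.log V + 1/((V:ℝ)+1) ≤ Real.log ((V:ℝ)+1) := by
        have hpos : (0:ℝ) < (V:ℝ)/((V:ℝ)+1) := by positivity
        have h3 := Real.log_le_sub_one_of_pos hpos
        rw [Real.log_div (by positivity) (by positivity)] at h3
        have hV1 : (0:ℝ) < (V:ℝ)+1 := by positivity
        have : (V:ℝ)/((V:ℝ)+1) - 1 = -(1/((V:ℝ)+1)) := by field_simp; ring
        linarith
      push_cast
      linarith

lemma count_pow_dvd {a b : ℤ} (hA : 2 ≤ a.natAbs) (hB : 1 ≤ b.natAbs)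
    {p : ℕ} (hp : p.Prime) (hpa : ¬ p ∣ a.natAbs)
    {m : ℕ} (hm : 1 ≤ m) (n0 k : ℕ) :
    (((Finset.Ioc n0 k).filter (fun n => p ^ m ∣ f a b n)).card : ℝ) * ((m:ℝ) * Real.log p) ≤
      (k:ℝ) * Real.log (2 * (a.natAbs + b.natAbs) : ℕ) + (m:ℝ) * Real.log p := by
  set A := a.natAbs with hAdef
  set B := b.natAbs with hBdef
  set C : ℕ := 2 * (A + B) with hCdef
  haveI : NeZero (p ^ m) := ⟨pow_ne_zero m hp.pos.ne'⟩
  set x : ZMod (p ^ m) := ((a : ℤ) : ZMod (p ^ m)) with hxdef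
  -- x is a unit
  have copr : Nat.Coprime A p := (Nat.Prime.coprime_iff_not_dvd hp).2 hpa |>.symm
  have copr2 : Nat.Coprime A (p ^ m) := copr.pow_right m
  have hxu : IsUnit x := by
    have hu : IsUnit ((A : ℕ) : ZMod (p ^ m)) := ⟨ZMod.unitOfCoprime A copr2, ZMod.coe_unitOfCoprime A copr2⟩
    rcases Int.natAbs_eq a with h | h
    · rw [hxdef, h, Int.cast_natCast]; exact hu
    · rw [hxdef, h, Int.cast_neg, Int.cast_natCast]; exact hu.neg
  set d : ℕ := orderOf x with hddef
  have hd : 0 < d := by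
    rw [hddef, ← hxu.unit_spec, orderOf_units]
    exact orderOf_pos _
  have hxd : x ^ d = 1 := pow_orderOf_eq_one x
  -- size bound for the order
  have hsize : p ^ m ≤ C ^ d := by
    have h0 : ((a ^ d - 1 : ℤ) : ZMod (p ^ m)) = 0 := by push_cast; rw [← hxdef, hxd]; ring
    have hdvd : ((p ^ m : ℕ) : ℤ) ∣ a ^ d - 1 := (ZMod.intCast_zmod_eq_zero_iff_dvd _ _).1 h0
    have hdvd2 : p ^ m ∣ (a ^ d - 1).natAbs := Int.natCast_dvd.1 (by exact_mod_cast hdvd)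
    have hne : (a ^ d - 1).natAbs ≠ 0 := by
      intro h
      have h2 : a ^ d = 1 := by
        have := Int.natAbs_eq_zero.1 h; omega
      have h3 : A ^ d = 1 := by
        rw [hAdef, ← Int.natAbs_pow, h2]; rfl
      have := pow_pos (show 0 < 2 by norm_num) d
      have h4 : 2 ^ d ≤ A ^ d := Nat.pow_le_pow_left hA d
      have h5 : 2 ≤ 2 ^ d := Nat.one_lt_two_pow_iff.2 (by omega)
      omega
    have h6 : p ^ m ≤ (a ^ d - 1).natAbs := Nat.le_of_dvd (Nat.pos_of_ne_zero hne) hdvd2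
    have h7 : (a ^ d - 1).natAbs ≤ (2 * (A + 1)) ^ d := by
      have := f_upper (a := a) (b := 1) hA (n := d) (k := d) hd le_rfl
      simpa [f] using this
    have h8 : (2 * (A + 1)) ^ d ≤ C ^ d := Nat.pow_le_pow_left (by omega) d
    omega
  have hCpos : (1:ℕ) < C := by omega
  have hlogC : (0:ℝ) ≤ Real.log C := Real.log_nonneg (by exact_mod_cast hCpos.le)
  have hlogp : (0:ℝ) ≤ Real.log p := Real.log_nonneg (by exact_mod_cast hp.one_lt.le)
  have hreal : (m:ℝ) * Real.log p ≤ (d:ℝ) * Real.log C := by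
    have := Real.log_le_log (show (0:ℝ) < ((p^m : ℕ):ℝ) from Nat.cast_pos.2 (pow_pos hp.pos m)) (show ((p^m : ℕ):ℝ) ≤ ((C^d : ℕ):ℝ) by exact_mod_cast hsize)
    rwa [Nat.cast_pow, Nat.cast_pow, Real.log_pow, Real.log_pow] at this
  -- counting
  set S := (Finset.Ioc n0 k).filter (fun n => p ^ m ∣ f a b n) with hSdef
  have hcard : S.card ≤ k / d + 1 := by
    rcases S.eq_empty_or_nonempty with h | hS
    · simp [h]
    · set n1 := S.min' hS with hn1def
      have hn1S : n1 ∈ S := S.min'_mem hS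
      have hbval : ∀ n ∈ S, x ^ n = ((b : ℤ) : ZMod (p ^ m)) := by
        intro n hn
        have hdv : p ^ m ∣ f a b n := (Finset.mem_filter.1 hn).2
        have : ((p ^ m : ℕ) : ℤ) ∣ a ^ n - b := by
          rw [Int.natCast_dvd]; exact hdv
        have h0 : ((a ^ n - b : ℤ) : ZMod (p ^ m)) = 0 :=
          (ZMod.intCast_zmod_eq_zero_iff_dvd _ _).2 (by exact_mod_cast this)
        push_cast at h0
        rw [sub_eq_zero] at h0
        rw [hxdef]; exact_mod_cast h0
      have hdvd_diff : ∀ n ∈ S, d ∣ n - n1 := by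
        intro n hn
        have h1 : n1 ≤ n := S.min'_le n hn
        have e : n1 + (n - n1) = n := by omega
        have h2 : x ^ n1 * x ^ (n - n1) = x ^ n1 * 1 := by
          rw [mul_one, ← pow_add, e, hbval n hn, ← hbval n1 hn1S]
        have h3 : x ^ (n - n1) = 1 := (hxu.pow n1).mul_left_cancel h2
        exact orderOf_dvd_of_pow_eq_one h3
      calc S.card ≤ (Finset.range (k/d + 1)).card := ?_
        _ = k/d + 1 := by simp
      apply Finset.card_le_card_of_injOn (fun n => (n - n1) / d) ?_ ?_
      · intro n hn
        simp only [Finset.mem_coe, Finset.mem_range]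
        have h1 : n ≤ k := (Finset.mem_Ioc.1 (Finset.mem_filter.1 hn).1).2
        have : (n - n1) / d ≤ k / d := Nat.div_le_div_right (by omega)
        omega
      · intro n hn n' hn' heq
        have e1 : d * ((n - n1)/d) = n - n1 := Nat.mul_div_cancel' (hdvd_diff n hn)
        have e2 : d * ((n' - n1)/d) = n' - n1 := Nat.mul_div_cancel' (hdvd_diff n' hn')
        have l1 : n1 ≤ n := S.min'_le n hn
        have l2 : n1 ≤ n' := S.min'_le n' hn'
        have heq' : (n - n1)/d = (n' - n1)/d := heq
        rw [heq'] at e1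
        omega
  have hc1 : (S.card : ℝ) ≤ (k:ℝ)/(d:ℝ) + 1 := by
    have h1 : ((k / d : ℕ) : ℝ) ≤ (k:ℝ)/(d:ℝ) := Nat.cast_div_le
    have h2 : (S.card : ℝ) ≤ ((k/d : ℕ) : ℝ) + 1 := by exact_mod_cast hcard
    linarith
  have hdpos : (0:ℝ) < (d:ℝ) := by exact_mod_cast hd
  have hmlp : (0:ℝ) ≤ (m:ℝ) * Real.log p := by positivity
  calc (S.card : ℝ) * ((m:ℝ) * Real.log p) ≤ ((k:ℝ)/(d:ℝ) + 1) * ((m:ℝ) * Real.log p) :=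
        mul_le_mul_of_nonneg_right hc1 hmlp
    _ = (k:ℝ) * (((m:ℝ) * Real.log p)/(d:ℝ)) + (m:ℝ) * Real.log p := by ring
    _ ≤ (k:ℝ) * Real.log C + (m:ℝ) * Real.log p := by
        have : ((m:ℝ) * Real.log p)/(d:ℝ) ≤ Real.log C := by
          rw [div_le_iff₀ hdpos]
          linarith [hreal]
        have hk0 : (0:ℝ) ≤ (k:ℝ) := by positivity
        nlinarith

lemma per_prime {a b : ℤ} (hA : 2 ≤ a.natAbs) (hB : 1 ≤ b.natAbs) {k : ℕ}
    (hk : b.natAbs + 1 < k)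
    {p : ℕ} (hp : p.Prime) (hpa : ¬ p ∣ a.natAbs)
    (hpF : ∃ n ∈ Finset.Ioc (b.natAbs+1) k, p ∣ f a b n) :
    (∑ n ∈ Finset.Ioc (b.natAbs+1) k, ((f a b n).factorization p : ℝ)) * Real.log p ≤
      (k:ℝ) * Real.log ((2*(a.natAbs+b.natAbs) : ℕ) : ℝ) *
        (2 + Real.log (((2*(a.natAbs+b.natAbs)) * k : ℕ) : ℝ)) := by
  set A := a.natAbs with hAdef
  set B := b.natAbs with hBdef
  set C : ℕ := 2 * (A + B) with hCdef
  set I := Finset.Ioc (B+1) k with hIdef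
  have hIne : I.Nonempty := ⟨k, by simp [hIdef]; omega⟩
  set V : ℕ := I.sup (fun n => (f a b n).factorization p) with hVdef
  have hlogp : (0:ℝ) ≤ Real.log p := Real.log_nonneg (by exact_mod_cast hp.one_lt.le)
  have hlogC : (0:ℝ) ≤ Real.log (C:ℝ) := Real.log_nonneg (by exact_mod_cast (show (1:ℕ) ≤ C by omega))
  -- V ≥ 1
  have hV1 : 1 ≤ V := by
    obtain ⟨n1, hn1, hdvd⟩ := hpF
    have hne : f a b n1 ≠ 0 := f_ne_zero hA (Finset.mem_Ioc.1 hn1).1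
    have : 1 ≤ (f a b n1).factorization p :=
      (hp.factorization_pos_of_dvd hne hdvd)
    exact le_trans this (Finset.le_sup (f := fun n => (f a b n).factorization p) hn1)
  -- V attained
  obtain ⟨ns, hns, hVeq⟩ := Finset.exists_mem_eq_sup I hIne (fun n => (f a b n).factorization p)
  have hnsI := Finset.mem_Ioc.1 hns
  have hfns : f a b ns ≠ 0 := f_ne_zero hA hnsI.1
  have hpV : p ^ V ∣ f a b ns := by
    rw [hVdef, hVeq]; exact Nat.ordProj_dvd _ _
  have hVle : p ^ V ≤ C ^ k :=
    (Nat.le_of_dvd (Nat.pos_of_ne_zero hfns) hpV).trans (f_upper hA (by omega) hnsI.2)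
  have hVlog : (V:ℝ) * Real.log p ≤ (k:ℝ) * Real.log (C:ℝ) := by
    have := Real.log_le_log (show (0:ℝ) < ((p^V : ℕ):ℝ) from Nat.cast_pos.2 (pow_pos hp.pos V))
      (show ((p^V : ℕ):ℝ) ≤ ((C^k : ℕ):ℝ) by exact_mod_cast hVle)
    rwa [Nat.cast_pow, Nat.cast_pow, Real.log_pow, Real.log_pow] at this
  have hVCk : V ≤ C * k := by
    have h2V : 2 ^ V ≤ 2 ^ (C * k) := by
      calc 2 ^ V ≤ p ^ V := Nat.pow_le_pow_left hp.two_le V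
      _ ≤ C ^ k := hVle
      _ ≤ (2 ^ C) ^ k := Nat.pow_le_pow_left (Nat.lt_two_pow_self (n := C)).le k
      _ = 2 ^ (C * k) := by rw [← pow_mul]
    exact (Nat.pow_le_pow_iff_right (by norm_num)).1 h2V
  -- swap sums
  have hswap : ∑ n ∈ I, (f a b n).factorization p =
      ∑ m ∈ Finset.Icc 1 V, ((I.filter (fun n => p ^ m ∣ f a b n)).card) := by
    have step1 : ∀ n ∈ I, (f a b n).factorization p =
        ((Finset.Icc 1 V).filter (fun m => p ^ m ∣ f a b n)).card := by
      intro n hn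
      have hfn : f a b n ≠ 0 := f_ne_zero hA (Finset.mem_Ioc.1 hn).1
      have hv : (f a b n).factorization p ≤ V := Finset.le_sup (f := fun n => (f a b n).factorization p) hn
      have heq : (Finset.Icc 1 V).filter (fun m => p ^ m ∣ f a b n) =
          Finset.Icc 1 ((f a b n).factorization p) := by
        ext m
        simp only [Finset.mem_filter, Finset.mem_Icc,
          hp.pow_dvd_iff_le_factorization hfn]
        omega
      rw [heq, Nat.card_Icc]
      omega
    calc ∑ n ∈ I, (f a b n).factorization p
        = ∑ n ∈ I, ((Finset.Icc 1 V).filter (fun m => p ^ m ∣ f a b n)).card :=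
          Finset.sum_congr rfl step1
      _ = ∑ n ∈ I, ∑ m ∈ Finset.Icc 1 V, (if p ^ m ∣ f a b n then 1 else 0) := by
          apply Finset.sum_congr rfl; intro n _; rw [Finset.card_filter]
      _ = ∑ m ∈ Finset.Icc 1 V, ∑ n ∈ I, (if p ^ m ∣ f a b n then 1 else 0) :=
          Finset.sum_comm
      _ = ∑ m ∈ Finset.Icc 1 V, ((I.filter (fun n => p ^ m ∣ f a b n)).card) := by
          apply Finset.sum_congr rfl; intro m _; rw [Finset.card_filter]
  -- real estimate
  have hperm : ∀ m ∈ Finset.Icc 1 V,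
      ((I.filter (fun n => p ^ m ∣ f a b n)).card : ℝ) * Real.log p ≤
        (k:ℝ) * Real.log (C:ℝ) * (1/(m:ℝ)) + Real.log p := by
    intro m hm
    have hm1 : 1 ≤ m := (Finset.mem_Icc.1 hm).1
    have hmpos : (0:ℝ) < (m:ℝ) := by exact_mod_cast hm1
    have hcount := count_pow_dvd hA hB hp hpa hm1 (B+1) k
    set c := ((I.filter (fun n => p ^ m ∣ f a b n)).card : ℝ) with hcdef
    have hc0 : 0 ≤ c := by positivity
    calc c * Real.log p = (c * ((m:ℝ) * Real.log p)) / m := by field_simp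
      _ ≤ ((k:ℝ) * Real.log (C:ℝ) + (m:ℝ) * Real.log p) / m := by gcongr
      _ = (k:ℝ) * Real.log (C:ℝ) * (1/(m:ℝ)) + Real.log p := by field_simp
  have hsum : (∑ n ∈ I, ((f a b n).factorization p : ℝ)) * Real.log p ≤
      (k:ℝ) * Real.log (C:ℝ) * (1 + Real.log V) + (V:ℝ) * Real.log p := by
    have hcast : (∑ n ∈ I, ((f a b n).factorization p : ℝ)) =
        ∑ m ∈ Finset.Icc 1 V, ((I.filter (fun n => p ^ m ∣ f a b n)).card : ℝ) := by
      rw [← Nat.cast_sum, ← Nat.cast_sum, hswap]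
    rw [hcast, Finset.sum_mul]
    calc ∑ m ∈ Finset.Icc 1 V, ((I.filter (fun n => p ^ m ∣ f a b n)).card : ℝ) * Real.log p
        ≤ ∑ m ∈ Finset.Icc 1 V, ((k:ℝ) * Real.log (C:ℝ) * (1/(m:ℝ)) + Real.log p) :=
          Finset.sum_le_sum hperm
      _ = (k:ℝ) * Real.log (C:ℝ) * (∑ m ∈ Finset.Icc 1 V, 1/(m:ℝ)) +
            (Finset.Icc 1 V).card * Real.log p := by
          rw [Finset.sum_add_distrib, ← Finset.mul_sum, Finset.sum_const, nsmul_eq_mul]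
      _ ≤ (k:ℝ) * Real.log (C:ℝ) * (1 + Real.log V) + (V:ℝ) * Real.log p := by
          have h1 : ((Finset.Icc 1 V).card : ℝ) = (V:ℝ) := by rw [Nat.card_Icc, Nat.add_sub_cancel]
          rw [h1]
          have h2 := harmonic_le V
          have h3 : (0:ℝ) ≤ (k:ℝ) * Real.log (C:ℝ) := by positivity
          nlinarith
  have hlogV : Real.log (V:ℝ) ≤ Real.log ((C*k : ℕ) : ℝ) := by
    apply Real.log_le_log (by exact_mod_cast hV1)
    exact_mod_cast hVCk
  calc (∑ n ∈ I, ((f a b n).factorization p : ℝ)) * Real.log p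
      ≤ (k:ℝ) * Real.log (C:ℝ) * (1 + Real.log V) + (V:ℝ) * Real.log p := hsum
    _ ≤ (k:ℝ) * Real.log (C:ℝ) * (1 + Real.log (((C*k : ℕ)) : ℝ)) + (k:ℝ) * Real.log (C:ℝ) := by
        have h3 : (0:ℝ) ≤ (k:ℝ) * Real.log (C:ℝ) := by positivity
        nlinarith [hVlog, hlogV]
    _ = (k:ℝ) * Real.log (C:ℝ) * (2 + Real.log (((C * k : ℕ)) : ℝ)) := by ring


lemma apart {a b : ℤ} (hA : 2 ≤ a.natAbs) (hB : 1 ≤ b.natAbs) {n : ℕ}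
    (hn : b.natAbs + 1 < n) :
    ∑ p ∈ (f a b n).primeFactors.filter (fun p => p ∣ a.natAbs),
        ((f a b n).factorization p : ℝ) * Real.log p ≤ Real.log (b.natAbs : ℝ) := by
  set B := b.natAbs with hBdef
  have hBne : B ≠ 0 := by omega
  have hfn : f a b n ≠ 0 := f_ne_zero hA hn
  have key : ∀ p ∈ (f a b n).primeFactors.filter (fun p => p ∣ a.natAbs),
      p ^ ((f a b n).factorization p) ∣ B := by
    intro p hp'
    obtain ⟨hpf, hpa⟩ := Finset.mem_filter.1 hp'
    have hp : p.Prime := Nat.prime_of_mem_primeFactors hpf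
    have hpaZ : (p:ℤ) ∣ a := Int.natCast_dvd.2 hpa
    set v := (f a b n).factorization p with hvdef
    have hv : (p:ℤ)^v ∣ a ^ n - b := by
      have h1 : p ^ v ∣ f a b n := Nat.ordProj_dvd _ _
      have h2 : (↑(p^v : ℕ) : ℤ) ∣ a ^ n - b := Int.natCast_dvd.2 h1
      exact_mod_cast h2
    have hvn : v < n := by
      by_contra hcon
      push_neg at hcon
      have h3 : (p:ℤ)^n ∣ a ^ n - b := dvd_trans (pow_dvd_pow _ hcon) hv
      have h4 : (p:ℤ)^n ∣ a ^ n := pow_dvd_pow_of_dvd hpaZ n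
      have h5 : (p:ℤ)^n ∣ b := (dvd_sub h4 h3).trans (by ring_nf; exact dvd_refl _)
      have h6 : p ^ n ∣ B := by
        rw [hBdef, ← Int.natCast_dvd]; exact_mod_cast h5
      have h7 : p ^ n ≤ B := Nat.le_of_dvd (by omega) h6
      have h8 : 2 ^ n ≤ p ^ n := Nat.pow_le_pow_left hp.two_le n
      have h9 : B < 2 ^ n := lt_of_lt_of_le (Nat.lt_two_pow_self (n := B)) (Nat.pow_le_pow_right (by norm_num) (by omega))
      omega
    have h4 : (p:ℤ)^v ∣ a ^ n := dvd_trans (pow_dvd_pow _ hvn.le) (pow_dvd_pow_of_dvd hpaZ n)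
    have h5 : (p:ℤ)^v ∣ b := (dvd_sub h4 hv).trans (by ring_nf; exact dvd_refl _)
    rw [hBdef, ← Int.natCast_dvd]
    exact_mod_cast h5
  have hsub : (f a b n).primeFactors.filter (fun p => p ∣ a.natAbs) ⊆ B.primeFactors := by
    intro p hp'
    obtain ⟨hpf, _⟩ := Finset.mem_filter.1 hp'
    have hp : p.Prime := Nat.prime_of_mem_primeFactors hpf
    have h1 : 1 ≤ (f a b n).factorization p := (hp.factorization_pos_of_dvd hfn
      (Nat.dvd_of_mem_primeFactors hpf))
    have h2 : p ∣ B := dvd_trans (dvd_pow_self p (by omega)) (key p hp')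
    exact Nat.mem_primeFactors.2 ⟨hp, h2, hBne⟩
  calc ∑ p ∈ (f a b n).primeFactors.filter (fun p => p ∣ a.natAbs),
          ((f a b n).factorization p : ℝ) * Real.log p
      ≤ ∑ p ∈ (f a b n).primeFactors.filter (fun p => p ∣ a.natAbs),
          ((B.factorization p : ℝ)) * Real.log p := by
        apply Finset.sum_le_sum
        intro p hp'
        have hp : p.Prime := Nat.prime_of_mem_primeFactors (Finset.mem_filter.1 hp').1
        have h1 : (f a b n).factorization p ≤ B.factorization p :=
          (hp.pow_dvd_iff_le_factorization hBne).1 (key p hp')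
        have hlogp : (0:ℝ) ≤ Real.log p := Real.log_nonneg (by exact_mod_cast hp.one_lt.le)
        have : ((f a b n).factorization p : ℝ) ≤ (B.factorization p : ℝ) := by exact_mod_cast h1
        nlinarith
    _ ≤ ∑ p ∈ B.primeFactors, ((B.factorization p : ℝ)) * Real.log p := by
        apply Finset.sum_le_sum_of_subset_of_nonneg hsub
        intro p hp' _
        have hp : p.Prime := Nat.prime_of_mem_primeFactors hp'
        have hlogp : (0:ℝ) ≤ Real.log p := Real.log_nonneg (by exact_mod_cast hp.one_lt.le)
        positivity
    _ = Real.log (B : ℝ) := by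
        rw [Real.log_nat_eq_sum_factorization, Finsupp.sum, Nat.support_factorization]

lemma master {a b : ℤ} (hA : 2 ≤ a.natAbs) (hB : 1 ≤ b.natAbs) {k : ℕ}
    (hk : 2*(b.natAbs + 2) ≤ k) :
    (k:ℝ)*(k:ℝ)/8 * Real.log 2 ≤ (k:ℝ) * Real.log (b.natAbs : ℝ) +
      ((Fk a b k).card : ℝ) * ((k:ℝ) * Real.log ((2*(a.natAbs+b.natAbs) : ℕ):ℝ) *
        (2 + Real.log (((2*(a.natAbs+b.natAbs))*k : ℕ):ℝ)) ) := by
  set A := a.natAbs with hAdef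
  set B := b.natAbs with hBdef
  set I := Finset.Ioc (B+1) k with hIdef
  have hk2 : 2 ≤ k := by omega
  -- Step 1: lower bound on sum of logs
  have hlog2 : (0:ℝ) ≤ Real.log 2 := Real.log_nonneg (by norm_num)
  have hstep1 : (k:ℝ)*(k:ℝ)/8 * Real.log 2 ≤ ∑ n ∈ I, Real.log (f a b n) := by
    have hsub : Finset.Ioc (k/2) k ⊆ I := by
      rw [hIdef]
      apply Finset.Ioc_subset_Ioc_left
      omega
    have hterm : ∀ n ∈ Finset.Ioc (k/2) k, (k:ℝ)/4 * Real.log 2 ≤ Real.log (f a b n) := by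
      intro n hn
      obtain ⟨hn1, hn2⟩ := Finset.mem_Ioc.1 hn
      have hnB : B + 1 < n := by omega
      have h1 : 2 ^ (n-1) ≤ f a b n := f_lower hA hnB
      have h2 : Real.log (2 ^ (n-1) : ℕ) ≤ Real.log (f a b n) :=
        Real.log_le_log (by positivity) (by exact_mod_cast h1)
      have h3 : Real.log ((2:ℕ) ^ (n-1) : ℕ) = ((n-1 : ℕ):ℝ) * Real.log 2 := by
        push_cast
        rw [Real.log_pow]
      have h4 : (k:ℝ)/4 ≤ ((n-1:ℕ):ℝ) := by
        have : k ≤ 4 * (n-1) := by omega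
        have := (Nat.cast_le (α := ℝ)).2 this
        push_cast at this
        linarith
      calc (k:ℝ)/4 * Real.log 2 ≤ ((n-1:ℕ):ℝ) * Real.log 2 := by nlinarith
        _ = Real.log ((2:ℕ) ^ (n-1) : ℕ) := h3.symm
        _ ≤ Real.log (f a b n) := by exact_mod_cast h2
    have hcard : (k:ℝ)/2 ≤ ((Finset.Ioc (k/2) k).card : ℝ) := by
      rw [Nat.card_Ioc]
      have : k ≤ 2 * (k - k/2) := by omega
      have := (Nat.cast_le (α := ℝ)).2 this
      push_cast at this
      linarith
    have hnonneg : ∀ n ∈ I, (0:ℝ) ≤ Real.log (f a b n) := by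
      intro n _; positivity
    calc (k:ℝ)*(k:ℝ)/8 * Real.log 2 = ((k:ℝ)/2) * ((k:ℝ)/4 * Real.log 2) := by ring
      _ ≤ ((Finset.Ioc (k/2) k).card : ℝ) * ((k:ℝ)/4 * Real.log 2) := by
          have h0 : (0:ℝ) ≤ (k:ℝ)/4 * Real.log 2 := by positivity
          nlinarith
      _ ≤ ∑ n ∈ Finset.Ioc (k/2) k, Real.log (f a b n) := by
          rw [← nsmul_eq_mul]
          exact Finset.card_nsmul_le_sum _ _ _ hterm
      _ ≤ ∑ n ∈ I, Real.log (f a b n) :=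
          Finset.sum_le_sum_of_subset_of_nonneg hsub (fun n hn _ => hnonneg n hn)
  -- Step 2: expansion into prime factorizations and upper bound
  have hstep2 : ∑ n ∈ I, Real.log (f a b n) ≤ (k:ℝ) * Real.log (B : ℝ) +
      ((Fk a b k).card : ℝ) * ((k:ℝ) * Real.log ((2*(A+B) : ℕ):ℝ) *
        (2 + Real.log (((2*(A+B))*k : ℕ):ℝ))) := by
    have hexp : ∀ n ∈ I, Real.log (f a b n) =
        ∑ p ∈ (f a b n).primeFactors, ((f a b n).factorization p : ℝ) * Real.log p := by
      intro n hn
      rw [Real.log_nat_eq_sum_factorization, Finsupp.sum, Nat.support_factorization]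
    have hsplit : ∀ n ∈ I, Real.log (f a b n) ≤ Real.log (B:ℝ) +
        ∑ p ∈ Fk a b k, ((f a b n).factorization p : ℝ) * Real.log p := by
      intro n hn
      rw [hexp n hn,
        ← Finset.sum_filter_add_sum_filter_not ((f a b n).primeFactors) (fun p => p ∣ a.natAbs)]
      have h1 := apart hA hB (n := n) (Finset.mem_Ioc.1 hn).1
      have h2 : ∑ p ∈ (f a b n).primeFactors.filter (fun p => ¬ p ∣ a.natAbs),
            ((f a b n).factorization p : ℝ) * Real.log p
          ≤ ∑ p ∈ Fk a b k, ((f a b n).factorization p : ℝ) * Real.log p := by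
        apply Finset.sum_le_sum_of_subset_of_nonneg
        · intro p hp'
          exact Finset.mem_biUnion.2 ⟨n, hn, hp'⟩
        · intro p hp' _
          have hp : p.Prime := by
            obtain ⟨n', _, hmem⟩ := Finset.mem_biUnion.1 hp'
            exact Nat.prime_of_mem_primeFactors (Finset.mem_filter.1 hmem).1
          have : (0:ℝ) ≤ Real.log p := Real.log_nonneg (by exact_mod_cast hp.one_lt.le)
          positivity
      linarith
    calc ∑ n ∈ I, Real.log (f a b n)
        ≤ ∑ n ∈ I, (Real.log (B:ℝ) +
            ∑ p ∈ Fk a b k, ((f a b n).factorization p : ℝ) * Real.log p) :=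
          Finset.sum_le_sum hsplit
      _ = (I.card : ℝ) * Real.log (B:ℝ) +
            ∑ p ∈ Fk a b k, (∑ n ∈ I, ((f a b n).factorization p : ℝ)) * Real.log p := by
          rw [Finset.sum_add_distrib, Finset.sum_const, nsmul_eq_mul, Finset.sum_comm]
          congr 1
          apply Finset.sum_congr rfl
          intro p _
          rw [Finset.sum_mul]
      _ ≤ (k:ℝ) * Real.log (B:ℝ) +
            ∑ p ∈ Fk a b k, ((k:ℝ) * Real.log ((2*(A+B) : ℕ):ℝ) *
              (2 + Real.log (((2*(A+B))*k : ℕ):ℝ))) := by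
          have hc : (I.card : ℝ) ≤ (k:ℝ) := by
            rw [hIdef, Nat.card_Ioc]
            exact_mod_cast Nat.sub_le _ _
          have hlogB : (0:ℝ) ≤ Real.log (B:ℝ) := Real.log_nonneg (by exact_mod_cast hB)
          have hper : ∀ p ∈ Fk a b k,
              (∑ n ∈ I, ((f a b n).factorization p : ℝ)) * Real.log p ≤
              ((k:ℝ) * Real.log ((2*(A+B) : ℕ):ℝ) *
                (2 + Real.log (((2*(A+B))*k : ℕ):ℝ))) := by
            intro p hp'
            obtain ⟨n', hn', hmem⟩ := Finset.mem_biUnion.1 hp'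
            obtain ⟨hpf, hpa⟩ := Finset.mem_filter.1 hmem
            exact per_prime hA hB (by omega) (Nat.prime_of_mem_primeFactors hpf) hpa
              ⟨n', hn', Nat.dvd_of_mem_primeFactors hpf⟩
          have := Finset.sum_le_sum hper
          nlinarith
      _ = (k:ℝ) * Real.log (B:ℝ) +
            ((Fk a b k).card : ℝ) * ((k:ℝ) * Real.log ((2*(A+B) : ℕ):ℝ) *
              (2 + Real.log (((2*(A+B))*k : ℕ):ℝ))) := by
          rw [Finset.sum_const, nsmul_eq_mul]
  exact hstep1.trans hstep2


lemma cube_ineq {t : ℝ} (ht : 1 ≤ t) : t * (t * (2 + t)) ≤ 4 * t^3 - t := by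
  nlinarith [sq_nonneg t, sq_nonneg (t-1)]

set_option maxHeartbeats 1000000 in
theorem final (a b : ℤ) (ha : a ≠ 0) (hb : b ≠ 0) (ha1 : |a| ≠ 1) :
    ∃ c : ℝ, 0 < c ∧ ∃ x₀ : ℝ, ∀ x : ℝ, x₀ ≤ x →
      c * Real.log (Real.log x) ≤
        ({p : ℕ | p.Prime ∧ (p : ℝ) ≤ x ∧ ¬ (p : ℤ) ∣ a ∧
            ∃ n : ℕ, 0 < n ∧ (a : ZMod p) ^ n = (b : ZMod p)}.ncard : ℝ) := by
  have hA : 2 ≤ a.natAbs := by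
    have h1 : a.natAbs ≠ 0 := Int.natAbs_ne_zero.2 ha
    have h2 : a.natAbs ≠ 1 := by
      intro h
      apply ha1
      rw [Int.abs_eq_natAbs, h]; rfl
    omega
  have hB : 1 ≤ b.natAbs := by
    have := Int.natAbs_ne_zero.2 hb; omega
  set A := a.natAbs with hAdef
  set B := b.natAbs with hBdef
  set C : ℕ := 2*(A+B) with hCdef
  have hC6 : 6 ≤ C := by omega
  have hCreal : (6:ℝ) ≤ (C:ℝ) := by exact_mod_cast hC6
  have hBC : (B:ℝ) ≤ (C:ℝ) := by exact_mod_cast (show B ≤ C by omega)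
  have hlogC : (0:ℝ) < Real.log C := Real.log_pos (by linarith)
  have he : Real.exp 1 < 3 := by
    have := Real.exp_one_lt_d9; linarith
  have hlogC1 : (1:ℝ) < Real.log C := by
    rw [show (1:ℝ) = Real.log (Real.exp 1) by rw [Real.log_exp]]
    apply Real.log_lt_log (Real.exp_pos _)
    linarith
  have hlogCC : Real.log (C:ℝ) ≤ (C:ℝ) := by
    have := Real.log_le_sub_one_of_pos (show (0:ℝ) < (C:ℝ) by positivity)
    linarith
  -- eventual inequality from the little-o of (log)^3
  have htend : Tendsto (fun y : ℝ => Real.log y ^ 3 / ((2*(C:ℝ))⁻¹ * y + 0)) atTop (nhds 0) :=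
    Real.tendsto_pow_log_div_mul_add_atTop ((2*(C:ℝ))⁻¹) 0 3 (by positivity)
  have hev : ∀ᶠ y : ℝ in atTop, Real.log y ^ 3 / ((2*(C:ℝ))⁻¹ * y + 0) < Real.log 2 / 32 :=
    htend.eventually_lt_const (by positivity)
  obtain ⟨Y, hY⟩ := eventually_atTop.1 hev
  have hYlt : ∀ z : ℝ, Y ≤ z → 0 < z → Real.log z ^ 3 < Real.log 2 / 32 * (2*(C:ℝ))⁻¹ * z := by
    intro z hz hz0
    have h1 := hY z hz
    rw [div_lt_iff₀ (by positivity)] at h1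
    calc Real.log z ^ 3 < Real.log 2 / 32 * ((2*(C:ℝ))⁻¹ * z + 0) := h1
      _ = Real.log 2 / 32 * (2*(C:ℝ))⁻¹ * z := by ring
  clear hY hev htend
  set K : ℕ := max (⌈Y⌉₊ + 1) (2*(B + 2) + 1) with hKdef
  have hK1 : 1 ≤ K := by omega
  have hK2 : 2*(B + 2) + 1 ≤ K := le_max_right _ _
  have hYK : Y ≤ (K:ℝ) := by
    have h1 : Y ≤ (⌈Y⌉₊ : ℝ) + 1 := by linarith [Nat.le_ceil Y]
    have h2 : ((⌈Y⌉₊ : ℝ) + 1) ≤ (K:ℝ) := by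
      have : ⌈Y⌉₊ + 1 ≤ K := le_max_left _ _
      exact_mod_cast this
    linarith
  clear_value K
  clear hKdef
  refine ⟨1, one_pos, Real.exp (((K:ℝ)+1) * Real.log C), fun x hx => ?_⟩
  set y := Real.log x with hydef
  have hy1 : ((K:ℝ)+1) * Real.log C ≤ y := by
    rw [hydef]
    calc ((K:ℝ)+1) * Real.log C = Real.log (Real.exp (((K:ℝ)+1) * Real.log C)) := by
          rw [Real.log_exp]
      _ ≤ Real.log x := Real.log_le_log (Real.exp_pos _) hx
  have hxpos : (0:ℝ) < x := lt_of_lt_of_le (Real.exp_pos _) hx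
  have hKr0 : (0:ℝ) ≤ (K:ℝ) := Nat.cast_nonneg K
  have hy0 : (1:ℝ) ≤ y := by nlinarith
  clear_value y
  set k : ℕ := ⌊y / Real.log C⌋₊ with hkdef
  have hkK : K ≤ k := by
    rw [hkdef]
    apply Nat.le_floor
    rw [le_div_iff₀ hlogC]
    nlinarith
  have hfl1 : (k:ℝ) * Real.log C ≤ y := by
    have h0 := Nat.floor_le (show 0 ≤ y / Real.log C by positivity)
    rw [← hkdef] at h0
    calc (k:ℝ) * Real.log C ≤ (y / Real.log C) * Real.log C :=
          mul_le_mul_of_nonneg_right h0 hlogC.le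
      _ = y := by field_simp
  have hfl2 : y < ((k:ℝ)+1) * Real.log C := by
    have h1 : y / Real.log C < (k:ℝ) + 1 := by
      have := Nat.lt_floor_add_one (y / Real.log C)
      rw [← hkdef] at this
      exact_mod_cast this
    rw [div_lt_iff₀ hlogC] at h1
    linarith
  clear_value k
  clear hkdef
  have hkpos : 1 ≤ k := le_trans hK1 hkK
  have hkreal : (1:ℝ) ≤ (k:ℝ) := by exact_mod_cast hkpos
  have hKk : (K:ℝ) ≤ (k:ℝ) := by exact_mod_cast hkK
  have hmaster := master hA hB (k := k) (by omega)
  simp only [← hAdef, ← hBdef, ← hCdef] at hmaster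
  -- C^k ≤ x
  have hCkx : ((C^k : ℕ):ℝ) ≤ x := by
    have h2 : ((C:ℝ))^k ≤ x := by
      have h3 : ((C:ℝ))^k = Real.exp ((k:ℝ) * Real.log C) := by
        rw [← Real.log_pow, Real.exp_log (by positivity)]
      rw [h3]
      calc Real.exp ((k:ℝ) * Real.log C) ≤ Real.exp y := Real.exp_le_exp.2 hfl1
        _ = x := by rw [hydef, Real.exp_log hxpos]
    push_cast
    exact h2
  -- the target set
  set T : Set ℕ := {p : ℕ | p.Prime ∧ (p : ℝ) ≤ x ∧ ¬ (p : ℤ) ∣ a ∧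
      ∃ n : ℕ, 0 < n ∧ (a : ZMod p) ^ n = (b : ZMod p)} with hTdef
  have hTfin : T.Finite := by
    apply Set.Finite.subset (Set.finite_Iic (⌈x⌉₊))
    intro p hp
    have h1 : (p:ℝ) ≤ x := hp.2.1
    have h2 : (p:ℝ) ≤ (⌈x⌉₊ : ℝ) := h1.trans (Nat.le_ceil x)
    exact Nat.cast_le.1 h2
  have hsub : ↑(Fk a b k) ⊆ T := by
    intro p hp'
    obtain ⟨n, hn, hmem⟩ := Finset.mem_biUnion.1 hp'
    obtain ⟨hpf, hpa⟩ := Finset.mem_filter.1 hmem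
    have hp : p.Prime := Nat.prime_of_mem_primeFactors hpf
    have hnIoc := Finset.mem_Ioc.1 hn
    have hfne : f a b n ≠ 0 := f_ne_zero hA hnIoc.1
    have hdvd : p ∣ f a b n := Nat.dvd_of_mem_primeFactors hpf
    refine ⟨hp, ?_, ?_, n, by omega, ?_⟩
    · have h1 : p ≤ C^k := (Nat.le_of_dvd (Nat.pos_of_ne_zero hfne) hdvd).trans
        (f_upper hA (by omega) hnIoc.2)
      calc (p:ℝ) ≤ ((C^k : ℕ):ℝ) := by exact_mod_cast h1
        _ ≤ x := hCkx
    · rw [← hAdef] at hpa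
      intro hcon
      exact hpa (Int.natCast_dvd.1 hcon)
    · haveI : NeZero p := ⟨hp.ne_zero⟩
      have h1 : ((p:ℕ):ℤ) ∣ a^n - b := Int.natCast_dvd.2 hdvd
      have h2 : ((a^n - b : ℤ) : ZMod p) = 0 := (ZMod.intCast_zmod_eq_zero_iff_dvd _ _).2 h1
      push_cast at h2
      rw [sub_eq_zero] at h2
      exact h2
  have hcard : ((Fk a b k).card : ℝ) ≤ (T.ncard : ℝ) := by
    have h1 : (Fk a b k).card = (↑(Fk a b k) : Set ℕ).ncard := (Set.ncard_coe_finset _).symm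
    have h2 : (↑(Fk a b k) : Set ℕ).ncard ≤ T.ncard := Set.ncard_le_ncard hsub hTfin
    exact_mod_cast h1 ▸ h2
  -- analytic bounds
  have hCk12 : (12:ℝ) ≤ 2*(C:ℝ)*(k:ℝ) := by nlinarith
  set t := Real.log (2*(C:ℝ)*(k:ℝ)) with htdef
  clear_value t
  have ht1 : (1:ℝ) ≤ t := by
    rw [htdef, show (1:ℝ) = Real.log (Real.exp 1) by rw [Real.log_exp]]
    apply Real.log_le_log (Real.exp_pos _)
    linarith
  have hYk : Y ≤ 2*(C:ℝ)*(k:ℝ) := by nlinarith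
  have ht3 : t^3 < (k:ℝ) * Real.log 2 / 32 := by
    have h1 := hYlt (2*(C:ℝ)*(k:ℝ)) hYk (by positivity)
    rw [← htdef] at h1
    have h2 : Real.log 2 / 32 * (2*(C:ℝ))⁻¹ * (2*(C:ℝ)*(k:ℝ)) = (k:ℝ) * Real.log 2 / 32 := by
      field_simp
    rw [h2] at h1
    exact h1
  have hpsi : Real.log ((C:ℝ)*((k:ℝ)+1)) ≤ t := by
    rw [htdef]
    apply Real.log_le_log (by positivity)
    nlinarith
  have hlCk : Real.log (((C*k : ℕ)):ℝ) ≤ t := by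
    rw [htdef]
    apply Real.log_le_log ?_ ?_
    · push_cast; nlinarith
    · push_cast; nlinarith
  have hlC : Real.log (C:ℝ) ≤ t := by
    rw [htdef]
    apply Real.log_le_log (by positivity); nlinarith
  have hlB : Real.log (B:ℝ) ≤ t := by
    rw [htdef]
    apply Real.log_le_log (by exact_mod_cast hB)
    nlinarith
  have hlB0 : (0:ℝ) ≤ Real.log (B:ℝ) := Real.log_nonneg (by exact_mod_cast hB)
  have hlCk0 : (0:ℝ) ≤ Real.log (((C*k : ℕ)):ℝ) := by
    apply Real.log_nonneg
    have : 1 ≤ C*k := by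
      calc 1 ≤ 6*1 := by norm_num
      _ ≤ C*k := Nat.mul_le_mul hC6 hkpos
    exact_mod_cast this
  have hpsi0 : (0:ℝ) ≤ Real.log ((C:ℝ)*((k:ℝ)+1)) := Real.log_nonneg (by nlinarith)
  -- final chain
  set β := Real.log ((C:ℕ):ℝ) * (2 + Real.log (((C*k : ℕ)):ℝ)) with hβdef
  have hβpos : 0 < β := by
    rw [hβdef]
    exact mul_pos hlogC (by nlinarith)
  have hmain2 : (k:ℝ)/8 * Real.log 2 ≤ Real.log (B:ℝ) + ((Fk a b k).card : ℝ) * β := by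
    have hk0 : (0:ℝ) < (k:ℝ) := by linarith
    have heq : (k:ℝ)*(k:ℝ)/8*Real.log 2 = (k:ℝ)*((k:ℝ)/8*Real.log 2) := by ring
    have heq2 : (k:ℝ) * Real.log (B:ℝ) +
        ((Fk a b k).card : ℝ) * ((k:ℝ) * Real.log ((C : ℕ):ℝ) *
          (2 + Real.log (((C*k : ℕ)):ℝ))) =
        (k:ℝ)*(Real.log (B:ℝ) + ((Fk a b k).card : ℝ) * β) := by
      rw [hβdef]; ring
    rw [heq, heq2] at hmaster
    exact le_of_mul_le_mul_left hmaster hk0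
  have ht0 : (0:ℝ) ≤ t := by linarith
  have hβt : β ≤ t * (2 + t) := by
    rw [hβdef]
    exact mul_le_mul hlC (by linarith) (by linarith) ht0
  clear_value β
  have hψβ : Real.log ((C:ℝ)*((k:ℝ)+1)) * β + Real.log (B:ℝ) ≤ (k:ℝ)/8 * Real.log 2 := by
    have hb1 : Real.log ((C:ℝ)*((k:ℝ)+1)) * β ≤ t * (t * (2 + t)) :=
      mul_le_mul hpsi hβt hβpos.le ht0
    have hb2 : t * (t * (2 + t)) ≤ 4 * t^3 - t := cube_ineq ht1
    linarith
  have hL : Real.log y ≤ Real.log ((C:ℝ)*((k:ℝ)+1)) := by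
    apply Real.log_le_log (by linarith)
    nlinarith
  have hfinal : Real.log y ≤ ((Fk a b k).card : ℝ) := by
    have h1 : Real.log y * β ≤ Real.log ((C:ℝ)*((k:ℝ)+1)) * β :=
      mul_le_mul_of_nonneg_right hL hβpos.le
    have h2 : Real.log ((C:ℝ)*((k:ℝ)+1)) * β ≤ ((Fk a b k).card : ℝ) * β := by
      linarith
    have h3 := h1.trans h2
    exact le_of_mul_le_mul_right h3 hβpos
  rw [one_mul]
  exact hfinal.trans hcard


end TVAux

/-- **Theorem 1.2** (two-variable Artin conjecture, weak lower bound).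
Let `a, b` be nonzero integers with `|a| ≠ 1`. Then there exist `c > 0` and `x₀`
such that for all real `x ≥ x₀`, the number of primes `p ≤ x` with `p ∤ a` such that
`b mod p` lies in the subgroup of `𝔽_p^×` generated by `a mod p` (equivalently,
`a ^ n ≡ b (mod p)` for some positive integer `n`) is at least `c · log log x`. -/
theorem two_variable_artin_weak_lower_bound (a b : ℤ) (ha : a ≠ 0) (hb : b ≠ 0)
    (ha1 : |a| ≠ 1) :
    ∃ c : ℝ, 0 < c ∧ ∃ x₀ : ℝ, ∀ x : ℝ, x₀ ≤ x →
      c * Real.log (Real.log x) ≤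
        ({p : ℕ | p.Prime ∧ (p : ℝ) ≤ x ∧ ¬ (p : ℤ) ∣ a ∧
            ∃ n : ℕ, 0 < n ∧ (a : ZMod p) ^ n = (b : ZMod p)}.ncard : ℝ) :=
  TVAux.final a b ha hb ha1
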